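/- Let G be a finite simple graph of order n ≥ 2. Then γ*_{r3}(G) = 3 if and only if G is the empty graph on 3 vertices (the complement of K_3) or the path P_2 on two vertices. -/

import Mathlib

open SimpleGraph Finset

/-- A `k`-rainbow dominating function on a graph `H`. -/
def IsRDF {W : Type*} (H : SimpleGraph W) (k : ℕ) (f : W → Finset (Fin k)) : Prop :=
  ∀ w, f w = ∅ → ∀ c : Fin k, ∃ u, H.Adj w u ∧ c ∈ f u

/-- The weight of a rainbow dominating function. -/
noncomputable def rdfWeight {W : Type*} [Fintype W] {k : ℕ} (f : W → Finset (Fin k)) : ℕ :=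
  ∑ w, (f w).card

/-- The `k`-rainbow domination number of a graph. -/
noncomputable def rdn {W : Type*} [Fintype W] (H : SimpleGraph W) (k : ℕ) : ℕ :=
  sInf {n | ∃ f : W → Finset (Fin k), IsRDF H k f ∧ rdfWeight f = n}

/-- The middle graph of `G`, on vertex set `V(G) ⊕ E(G)`. -/
def middleGraph {V : Type*} (G : SimpleGraph V) : SimpleGraph (V ⊕ G.edgeSet) where
  Adj x y :=
    match x, y with
    | Sum.inl _, Sum.inl _ => False
    | Sum.inl v, Sum.inr e => v ∈ (e : Sym2 V)
    | Sum.inr e, Sum.inl v => v ∈ (e : Sym2 V)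
    | Sum.inr e, Sum.inr f => e ≠ f ∧ ∃ v, v ∈ (e : Sym2 V) ∧ v ∈ (f : Sym2 V)
  symm := by
    refine ⟨?_⟩
    rintro (v | e) (w | f) h
    · exact h.elim
    · exact h
    · exact h
    · exact ⟨Ne.symm h.1, h.2.imp fun v hv => ⟨hv.2, hv.1⟩⟩
  loopless := by
    refine ⟨?_⟩
    rintro (v | e) h
    · exact h.elim
    · exact h.1 rfl

/-- The middle `k`-rainbow domination number `γ*_{rk}(G)`. -/
noncomputable def mrdn {V : Type*} [Fintype V] (G : SimpleGraph V) (k : ℕ) : ℕ :=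
  letI := Classical.decEq V
  letI : DecidableRel G.Adj := fun _ _ => Classical.dec _
  rdn (middleGraph G) k

/-- The `k`-rainbow domatic number: the maximum size of a family of `k`-rainbow
dominating functions with `∑ i |f i v| ≤ k` for each vertex `v`. -/
noncomputable def rdomatic {W : Type*} (H : SimpleGraph W) (k : ℕ) : ℕ :=
  sSup {d | ∃ F : Fin d → W → Finset (Fin k), Function.Injective F ∧
    (∀ i, IsRDF H k (F i)) ∧ ∀ w, (∑ i, (F i w).card) ≤ k}

/-- The matching number `α'(G)`. -/
noncomputable def matchingNumber {V : Type*} [Fintype V] (G : SimpleGraph V) : ℕ :=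
  sSup {n | ∃ M : Finset (Sym2 V), ↑M ⊆ G.edgeSet ∧
    (∀ e ∈ M, ∀ f ∈ M, e ≠ f → ∀ v : V, ¬(v ∈ e ∧ v ∈ f)) ∧ M.card = n}

section aux

private lemma sum_eq_card_forall_one {α : Type*} [DecidableEq α] (s : Finset α) (g : α → ℕ)
    (h1 : ∀ x ∈ s, 1 ≤ g x) (hs : ∑ x ∈ s, g x = s.card) : ∀ x ∈ s, g x = 1 := by
  intro x hx
  have h2 : g x + ∑ y ∈ s.erase x, g y = ∑ y ∈ s, g y := Finset.add_sum_erase s g hx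
  have h3 : (s.erase x).card ≤ ∑ y ∈ s.erase x, g y := by
    rw [Finset.card_eq_sum_ones]
    exact Finset.sum_le_sum fun y hy => h1 y (Finset.mem_of_mem_erase hy)
  have h4 : (s.erase x).card = s.card - 1 := Finset.card_erase_of_mem hx
  have h5 : 1 ≤ s.card := Finset.card_pos.mpr ⟨x, hx⟩
  have h6 := h1 x hx
  omega

private lemma card_two_cases {V : Type*} [Fintype V] [DecidableEq V]
    (h2 : Fintype.card V = 2) {a b : V} (hab : a ≠ b) (v : V) : v = a ∨ v = b := by
  by_contra hcon
  push_neg at hcon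
  have hna : a ∉ ({b} : Finset V) := by simp [hab]
  have hnv : v ∉ ({a, b} : Finset V) := by simp [hcon.1, hcon.2]
  have h3 : ({v, a, b} : Finset V).card = 3 := by
    rw [Finset.card_insert_of_notMem hnv, Finset.card_insert_of_notMem hna,
      Finset.card_singleton]
  have h4 := Finset.card_le_univ ({v, a, b} : Finset V)
  omega

private lemma pg2_adj (u v : Fin 2) : (SimpleGraph.pathGraph 2).Adj u v ↔ u ≠ v := by
  rw [SimpleGraph.pathGraph_adj, Ne, Fin.ext_iff]
  have hu := u.isLt
  have hv := v.isLt
  omega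

private lemma weight_ge_three {W : Type*} [Fintype W] (H : SimpleGraph W)
    (f : W → Finset (Fin 3)) (hf : IsRDF H 3 f) (hW : 3 ≤ Fintype.card W) :
    3 ≤ rdfWeight f := by
  classical
  by_cases he : ∃ w, f w = ∅
  · obtain ⟨w, hw⟩ := he
    have hsub : (Finset.univ : Finset (Fin 3)) ⊆ Finset.univ.biUnion f := by
      intro c _
      obtain ⟨u, _, hu⟩ := hf w hw c
      exact Finset.mem_biUnion.mpr ⟨u, Finset.mem_univ u, hu⟩
    calc 3 = (Finset.univ : Finset (Fin 3)).card := by simp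
      _ ≤ (Finset.univ.biUnion f).card := Finset.card_le_card hsub
      _ ≤ ∑ w, (f w).card := Finset.card_biUnion_le
      _ = rdfWeight f := rfl
  · push_neg at he
    calc 3 ≤ Fintype.card W := hW
      _ = ∑ _w : W, 1 := by simp
      _ ≤ ∑ w, (f w).card := Finset.sum_le_sum fun w _ =>
          Finset.card_pos.mpr (he w)
      _ = rdfWeight f := rfl

private lemma no_weight_three {V : Type*} [Fintype V] [DecidableEq V] (G : SimpleGraph V)
    [Fintype G.edgeSet] {a b : V} (hab : G.Adj a b) (hV : 3 ≤ Fintype.card V)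
    (f : V ⊕ G.edgeSet → Finset (Fin 3)) (hf : IsRDF (middleGraph G) 3 f)
    (hw : rdfWeight f = 3) : False := by
  classical
  have hsplit : rdfWeight f
      = (∑ v : V, (f (Sum.inl v)).card) + ∑ e : G.edgeSet, (f (Sum.inr e)).card :=
    Fintype.sum_sum_type _
  rw [hsplit] at hw
  by_cases hA : ∀ v : V, (f (Sum.inl v)).Nonempty
  · have h1 : ∀ v : V, 1 ≤ (f (Sum.inl v)).card := fun v => Finset.card_pos.mpr (hA v)
    have hVle : Fintype.card V ≤ ∑ v : V, (f (Sum.inl v)).card := by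
      calc Fintype.card V = ∑ _v : V, 1 := by simp
        _ ≤ _ := Finset.sum_le_sum fun v _ => h1 v
    have hSVge : 3 ≤ ∑ v : V, (f (Sum.inl v)).card := le_trans hV hVle
    have hSV3 : ∑ v : V, (f (Sum.inl v)).card = 3 := by omega
    have hSE0 : ∑ e : G.edgeSet, (f (Sum.inr e)).card = 0 := by omega
    have hallE : ∀ e : G.edgeSet, f (Sum.inr e) = ∅ := fun e =>
      Finset.card_eq_zero.mp ((Finset.sum_eq_zero_iff.mp hSE0) e (Finset.mem_univ e))
    have hcard3 : Fintype.card V = 3 := by omega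
    have hone : ∀ v : V, (f (Sum.inl v)).card = 1 := by
      intro v
      refine sum_eq_card_forall_one Finset.univ (fun v => (f (Sum.inl v)).card)
        (fun x _ => h1 x) ?_ v (Finset.mem_univ v)
      rw [Finset.card_univ, hcard3]
      exact hSV3
    have he₀ : s(a, b) ∈ G.edgeSet := hab
    have he₀empty : f (Sum.inr ⟨s(a, b), he₀⟩) = ∅ := hallE _
    have hcols : ∀ c : Fin 3, c ∈ f (Sum.inl a) ∪ f (Sum.inl b) := by
      intro c
      obtain ⟨u, hu, hc⟩ := hf _ he₀empty c
      rcases u with v | e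
      · have hv : v = a ∨ v = b := Sym2.mem_iff.mp hu
        rcases hv with rfl | rfl
        · exact Finset.mem_union_left _ hc
        · exact Finset.mem_union_right _ hc
      · rw [hallE e] at hc
        exact absurd hc (Finset.notMem_empty c)
    have h3le : 3 ≤ (f (Sum.inl a) ∪ f (Sum.inl b)).card := by
      calc 3 = (Finset.univ : Finset (Fin 3)).card := by simp
        _ ≤ _ := Finset.card_le_card fun c _ => hcols c
    have hle2 : (f (Sum.inl a) ∪ f (Sum.inl b)).card ≤ 2 := by
      calc _ ≤ (f (Sum.inl a)).card + (f (Sum.inl b)).card := Finset.card_union_le _ _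
        _ ≤ 2 := by rw [hone a, hone b]
    omega
  · push_neg at hA
    obtain ⟨v₀, hv₀⟩ := hA
    have hcol : ∀ c : Fin 3, ∃ e : G.edgeSet, c ∈ f (Sum.inr e) := by
      intro c
      obtain ⟨u, hu, hc⟩ := hf _ hv₀ c
      rcases u with w | e
      · exact absurd hu (fun h => h)
      · exact ⟨e, hc⟩
    have hSE3 : 3 ≤ ∑ e : G.edgeSet, (f (Sum.inr e)).card := by
      have hsub : (Finset.univ : Finset (Fin 3))
          ⊆ Finset.univ.biUnion (fun e : G.edgeSet => f (Sum.inr e)) := by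
        intro c _
        obtain ⟨e, he⟩ := hcol c
        exact Finset.mem_biUnion.mpr ⟨e, Finset.mem_univ _, he⟩
      calc 3 = (Finset.univ : Finset (Fin 3)).card := by simp
        _ ≤ _ := Finset.card_le_card hsub
        _ ≤ _ := Finset.card_biUnion_le
    have hSV0 : ∑ v : V, (f (Sum.inl v)).card = 0 := by omega
    have hSEeq : ∑ e : G.edgeSet, (f (Sum.inr e)).card = 3 := by omega
    have hallV : ∀ v : V, f (Sum.inl v) = ∅ := fun v =>
      Finset.card_eq_zero.mp ((Finset.sum_eq_zero_iff.mp hSV0) v (Finset.mem_univ v))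
    set Wc : Fin 3 → Finset G.edgeSet :=
      fun c => Finset.univ.filter (fun e => c ∈ f (Sum.inr e)) with hWcdef
    have hswap : ∑ c : Fin 3, (Wc c).card = ∑ e : G.edgeSet, (f (Sum.inr e)).card := by
      rw [hWcdef]
      simp only [Finset.card_filter]
      rw [Finset.sum_comm]
      refine Finset.sum_congr rfl fun e _ => ?_
      rw [← Finset.card_filter]
      congr 1
      ext c
      simp
    have hWc1 : ∀ c : Fin 3, (Wc c).card = 1 := by
      intro c
      refine sum_eq_card_forall_one Finset.univ (fun c => (Wc c).card) ?_ ?_ c (Finset.mem_univ c)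
      · intro c _
        obtain ⟨e, he⟩ := hcol c
        exact Finset.card_pos.mpr ⟨e, Finset.mem_filter.mpr ⟨Finset.mem_univ _, he⟩⟩
      · rw [hswap, hSEeq]
        simp
    obtain ⟨e₀, he₀⟩ := Finset.card_eq_one.mp (hWc1 0)
    have hmem : ∀ v : V, v ∈ (↑e₀ : Sym2 V) := by
      intro v
      obtain ⟨u, hu, hc⟩ := hf (Sum.inl v) (hallV v) 0
      rcases u with w | e
      · exact absurd hu (fun h => h)
      · have hin : e ∈ Wc 0 := Finset.mem_filter.mpr ⟨Finset.mem_univ _, hc⟩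
        rw [he₀, Finset.mem_singleton] at hin
        subst hin
        exact hu
    obtain ⟨⟨x, y⟩, hxy⟩ := Quot.exists_rep (↑e₀ : Sym2 V)
    have hsub : (Finset.univ : Finset V) ⊆ {x, y} := by
      intro v _
      have hv := hmem v
      rw [← hxy] at hv
      rcases Sym2.mem_iff.mp hv with rfl | rfl
      · exact Finset.mem_insert_self _ _
      · exact Finset.mem_insert_of_mem (Finset.mem_singleton_self _)
    have hcard : Fintype.card V ≤ 2 := by
      calc Fintype.card V = (Finset.univ : Finset V).card := Finset.card_univ.symm
        _ ≤ ({x, y} : Finset V).card := Finset.card_le_card hsub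
        _ ≤ 2 := le_trans (Finset.card_insert_le _ _) (by simp)
    omega

end aux


theorem stmt1 {V : Type*} [Fintype V] (G : SimpleGraph V) (h : 2 ≤ Fintype.card V) :
    mrdn G 3 = 3 ↔
      (Nonempty (G ≃g (⊥ : SimpleGraph (Fin 3))) ∨ Nonempty (G ≃g pathGraph 2)) := by
  letI := Classical.decEq V
  letI : DecidableRel G.Adj := fun _ _ => Classical.dec _
  have hm : mrdn G 3 = rdn (middleGraph G) 3 := rfl
  rw [hm, rdn]
  set S : Set ℕ := {n | ∃ f : V ⊕ G.edgeSet → Finset (Fin 3),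
    IsRDF (middleGraph G) 3 f ∧ rdfWeight f = n} with hSdef
  have hSne : S.Nonempty := by
    refine ⟨_, fun _ => (Finset.univ : Finset (Fin 3)), fun w hw => ?_, rfl⟩
    exact absurd hw (Finset.univ_nonempty.ne_empty)
  constructor
  · intro h3
    have h3mem : (3 : ℕ) ∈ S := h3 ▸ Nat.sInf_mem hSne
    obtain ⟨f, hf, hwf⟩ := h3mem
    by_cases hE : ∃ a b, G.Adj a b
    · obtain ⟨a, b, hab⟩ := hE
      right
      have hV2 : Fintype.card V = 2 := by
        by_contra hne
        exact no_weight_three G hab (by omega) f hf hwf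
      have hab' : a ≠ b := G.ne_of_adj hab
      have htwo : ∀ v : V, v = a ∨ v = b := card_two_cases hV2 hab'
      have hGadj : ∀ x y : V, G.Adj x y ↔ x ≠ y := by
        intro x y
        constructor
        · exact G.ne_of_adj
        · intro hne
          rcases htwo x with rfl | rfl <;> rcases htwo y with rfl | rfl
          · exact absurd rfl hne
          · exact hab
          · exact hab.symm
          · exact absurd rfl hne
      refine ⟨⟨⟨fun v => if v = a then 0 else 1, fun i => if i = 0 then a else b, ?_, ?_⟩, ?_⟩⟩
      · intro v
        rcases htwo v with rfl | rfl
        · simp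
        · simp [hab'.symm]
      · intro i
        fin_cases i
        · simp
        · simp [hab', Ne.symm hab']
      · intro x y
        simp only [Equiv.coe_fn_mk]
        rw [pg2_adj, hGadj]
        rcases htwo x with rfl | rfl <;> rcases htwo y with rfl | rfl <;>
          simp [hab', Ne.symm hab']
    · push_neg at hE
      left
      have hEmpty : IsEmpty G.edgeSet := by
        refine ⟨fun e => ?_⟩
        obtain ⟨⟨x, y⟩, hxy⟩ := Quot.exists_rep (↑e : Sym2 V)
        have : (↑e : Sym2 V) ∈ G.edgeSet := e.2
        rw [← hxy] at this
        exact hE x y this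
      have hnon : ∀ v : V, (f (Sum.inl v)).Nonempty := by
        intro v
        rw [Finset.nonempty_iff_ne_empty]
        intro h0
        obtain ⟨u, hu, _⟩ := hf _ h0 0
        rcases u with w | e
        · exact hu
        · exact hEmpty.false e
      have hle : Fintype.card V ≤ 3 := by
        have hsplit : rdfWeight f
            = (∑ v : V, (f (Sum.inl v)).card) + ∑ e : G.edgeSet, (f (Sum.inr e)).card :=
          Fintype.sum_sum_type _
        have h1 : Fintype.card V ≤ ∑ v : V, (f (Sum.inl v)).card := by
          calc Fintype.card V = ∑ _v : V, 1 := by simp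
            _ ≤ _ := Finset.sum_le_sum fun v _ => Finset.card_pos.mpr (hnon v)
        omega
      have hne2 : Fintype.card V ≠ 2 := by
        intro h2
        have h2mem : (2 : ℕ) ∈ S := by
          refine ⟨Sum.elim (fun _ => ({0} : Finset (Fin 3))) (fun _ => {0}), ?_, ?_⟩
          · rintro (v | e) hw
            · exact absurd hw (Finset.singleton_ne_empty 0)
            · exact (hEmpty.false e).elim
          · rw [rdfWeight, Fintype.sum_sum_type]
            simp [h2, Fintype.card_eq_zero]
        have := Nat.sInf_le h2mem
        omega
      have hV3 : Fintype.card V = 3 := by omega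
      refine ⟨⟨Fintype.equivFinOfCardEq hV3, ?_⟩⟩
      intro x y
      exact iff_of_false (by simp) (hE x y)
  · intro hiso
    rcases hiso with hp | hp
    · obtain ⟨φ⟩ := hp
      have hE : ∀ a b : V, ¬ G.Adj a b := fun a b hadj =>
        absurd (φ.map_rel_iff.mpr hadj) (by simp)
      have hV3 : Fintype.card V = 3 := by
        rw [← Fintype.card_fin 3]
        exact Fintype.card_congr φ.toEquiv
      have hEmpty : IsEmpty G.edgeSet := by
        refine ⟨fun e => ?_⟩
        obtain ⟨⟨x, y⟩, hxy⟩ := Quot.exists_rep (↑e : Sym2 V)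
        have he2 : (↑e : Sym2 V) ∈ G.edgeSet := e.2
        rw [← hxy] at he2
        exact hE x y he2
      have h3mem : (3 : ℕ) ∈ S := by
        refine ⟨Sum.elim (fun _ => ({0} : Finset (Fin 3))) (fun _ => ∅), ?_, ?_⟩
        · rintro (v | e) hw
          · exact absurd hw (Finset.singleton_ne_empty 0)
          · exact (hEmpty.false e).elim
        · rw [rdfWeight, Fintype.sum_sum_type]
          simp [hV3, Fintype.card_eq_zero]
      refine le_antisymm (Nat.sInf_le h3mem) (le_csInf hSne ?_)
      rintro m ⟨f, hf, hwf⟩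
      rw [← hwf]
      refine weight_ge_three _ f hf ?_
      rw [Fintype.card_sum, hV3, Fintype.card_eq_zero]
    · obtain ⟨φ⟩ := hp
      have hV2 : Fintype.card V = 2 := by
        rw [← Fintype.card_fin 2]
        exact Fintype.card_congr φ.toEquiv
      set a := φ.symm 0 with ha
      set b := φ.symm 1 with hb
      have hab : G.Adj a b := φ.symm.map_rel_iff.mpr ((pg2_adj 0 1).mpr (by decide))
      have hab' : a ≠ b := G.ne_of_adj hab
      have htwo : ∀ v : V, v = a ∨ v = b := card_two_cases hV2 hab'
      have hcard1 : Fintype.card G.edgeSet = 1 := by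
        rw [Fintype.card_eq_one_iff]
        refine ⟨⟨s(a, b), hab⟩, ?_⟩
        rintro ⟨e, he⟩
        obtain ⟨⟨x, y⟩, hxy⟩ := Quot.exists_rep e
        subst hxy
        have hxyadj : G.Adj x y := he
        have hxyne : x ≠ y := G.ne_of_adj hxyadj
        apply Subtype.ext
        show s(x, y) = s(a, b)
        rcases htwo x with rfl | rfl <;> rcases htwo y with rfl | rfl
        · exact absurd rfl hxyne
        · rfl
        · exact Sym2.eq_swap
        · exact absurd rfl hxyne
      have h3mem : (3 : ℕ) ∈ S := by
        refine ⟨Sum.elim (fun _ => (∅ : Finset (Fin 3))) (fun _ => Finset.univ), ?_, ?_⟩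
        · rintro (v | e) hw
          · intro c
            refine ⟨Sum.inr ⟨s(a, b), hab⟩, ?_, Finset.mem_univ c⟩
            show v ∈ s(a, b)
            rw [Sym2.mem_iff]
            exact htwo v
          · exact absurd hw (Finset.univ_nonempty.ne_empty)
        · rw [rdfWeight, Fintype.sum_sum_type]
          simp only [Sum.elim_inl, Sum.elim_inr, Finset.card_empty, Finset.sum_const_zero,
            Finset.card_univ, Fintype.card_fin, Finset.sum_const, Finset.card_univ, hcard1,
            smul_eq_mul, zero_add, one_mul]
      refine le_antisymm (Nat.sInf_le h3mem) (le_csInf hSne ?_)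
      rintro m ⟨f, hf, hwf⟩
      rw [← hwf]
      refine weight_ge_three _ f hf ?_
      rw [Fintype.card_sum, hV2, hcard1]
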